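/- Let V ∈ C²(ℝ^d) satisfy |D_x^α V(x)| ≤ C⟨∇V(x)⟩^{1−ρ₀} for all |α| = 2, with ρ₀ > 0, and let s > 0 and r(x) = ⟨∇V(x)⟩^{−s}. Then there exists δ₀ > 0 such that |x−y| ≤ δ₀ r(x) implies δ₀ ≤ r(x)/r(y) ≤ 1/δ₀. -/

import Mathlib

noncomputable section

/-- The Japanese bracket of the gradient: `⟨∇V(x)⟩ = √(|∇V(x)|² + 1)`. -/
def japGrad {d : ℕ} (V : EuclideanSpace ℝ (Fin d) → ℝ) (x : EuclideanSpace ℝ (Fin d)) : ℝ :=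
  Real.sqrt (‖fderiv ℝ V x‖ ^ 2 + 1)

lemma japGrad_ge_one {d : ℕ} (V : EuclideanSpace ℝ (Fin d) → ℝ) (x : EuclideanSpace ℝ (Fin d)) :
    1 ≤ japGrad V x := by
  unfold japGrad
  calc (1:ℝ) = Real.sqrt 1 := by simp
    _ ≤ Real.sqrt (‖fderiv ℝ V x‖ ^ 2 + 1) :=
        Real.sqrt_le_sqrt (by nlinarith [sq_nonneg ‖fderiv ℝ V x‖])

lemma sqrt_sq_add_one_lip {a b : ℝ} (ha : 0 ≤ a) (hb : 0 ≤ b) :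
    Real.sqrt (a ^ 2 + 1) ≤ Real.sqrt (b ^ 2 + 1) + |a - b| := by
  have h1 : Real.sqrt (b ^ 2 + 1) ^ 2 = b ^ 2 + 1 := Real.sq_sqrt (by positivity)
  have h0 : 0 ≤ Real.sqrt (b ^ 2 + 1) := Real.sqrt_nonneg _
  have h2 : b ≤ Real.sqrt (b ^ 2 + 1) := by nlinarith
  have key : a ^ 2 + 1 ≤ (Real.sqrt (b ^ 2 + 1) + |a - b|) ^ 2 := by
    nlinarith [le_abs_self (a - b), abs_nonneg (a - b), sq_abs (a - b)]
  calc Real.sqrt (a ^ 2 + 1) ≤ Real.sqrt ((Real.sqrt (b ^ 2 + 1) + |a - b|) ^ 2) :=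
        Real.sqrt_le_sqrt key
    _ = Real.sqrt (b ^ 2 + 1) + |a - b| := Real.sqrt_sq (by positivity)

lemma japGrad_lip {d : ℕ} (V : EuclideanSpace ℝ (Fin d) → ℝ)
    (x y : EuclideanSpace ℝ (Fin d)) :
    japGrad V x ≤ japGrad V y + ‖fderiv ℝ V x - fderiv ℝ V y‖ := by
  have h := sqrt_sq_add_one_lip (norm_nonneg (fderiv ℝ V x)) (norm_nonneg (fderiv ℝ V y))
  have h2 : |‖fderiv ℝ V x‖ - ‖fderiv ℝ V y‖| ≤ ‖fderiv ℝ V x - fderiv ℝ V y‖ :=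
    abs_norm_sub_norm_le _ _
  unfold japGrad
  linarith

set_option maxHeartbeats 1000000 in
/-- slow variation of the weight `r(x) = ⟨∇V(x)⟩^{−s}`. If
`|D²V(x)| ≤ C⟨∇V(x)⟩^{1−ρ₀}` with `ρ₀ > 0` and `s > 0`, then there is `δ₀ > 0` such that
`|x−y| ≤ δ₀ r(x)` implies `δ₀ ≤ r(x)/r(y) ≤ 1/δ₀`. -/
theorem slow_variation (d : ℕ) (V : EuclideanSpace ℝ (Fin d) → ℝ) (hV : ContDiff ℝ 2 V)
    (C ρ₀ s : ℝ) (hρ₀ : 0 < ρ₀) (hs : 0 < s)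
    (hC : ∀ x, ‖fderiv ℝ (fderiv ℝ V) x‖ ≤ C * japGrad V x ^ (1 - ρ₀)) :
    ∃ δ₀ : ℝ, 0 < δ₀ ∧ ∀ x y : EuclideanSpace ℝ (Fin d),
      ‖x - y‖ ≤ δ₀ * japGrad V x ^ (-s) →
        δ₀ ≤ japGrad V x ^ (-s) / japGrad V y ^ (-s) ∧
        japGrad V x ^ (-s) / japGrad V y ^ (-s) ≤ 1 / δ₀ := by
  have hC0 : 0 ≤ C := by
    have h := hC 0
    have hj : 0 < japGrad V 0 ^ (1 - ρ₀) :=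
      Real.rpow_pos_of_pos (lt_of_lt_of_le one_pos (japGrad_ge_one V 0)) _
    nlinarith [norm_nonneg (fderiv ℝ (fderiv ℝ V) 0)]
  have hf1 : ContDiff ℝ 1 (fderiv ℝ V) := hV.fderiv_right (by norm_num)
  set δ₀ := min (1 / (4 * (C + 1))) ((2:ℝ) ^ (-s)) with hδdef
  have hδpos : 0 < δ₀ := lt_min (by positivity) (Real.rpow_pos_of_pos two_pos _)
  have hδ1 : δ₀ ≤ 1 / (4 * (C + 1)) := min_le_left _ _
  have hδ2 : δ₀ ≤ (2:ℝ) ^ (-s) := min_le_right _ _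
  have hCδ : C * δ₀ ≤ 1 / 4 := by
    rw [le_div_iff₀ (by positivity)] at hδ1
    nlinarith
  refine ⟨δ₀, hδpos, fun x y hxy => ?_⟩
  have hjx : 1 ≤ japGrad V x := japGrad_ge_one V x
  have hjy : 1 ≤ japGrad V y := japGrad_ge_one V y
  have hrx : japGrad V x ^ (-s) ≤ 1 :=
    Real.rpow_le_one_of_one_le_of_nonpos hjx (by linarith)
  have hxy1 : ‖x - y‖ ≤ δ₀ := le_trans hxy (by nlinarith)
  -- max of japGrad on segment
  have hseg : IsCompact (segment ℝ x y) := by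
    rw [segment_eq_image']
    exact isCompact_Icc.image (by continuity)
  obtain ⟨z, hzmem, hzmax⟩ := hseg.exists_isMaxOn
    ⟨x, left_mem_segment ℝ x y⟩
    (((hf1.continuous.norm.pow 2).add continuous_const).sqrt.continuousOn :
      ContinuousOn (japGrad V) (segment ℝ x y))
  set M := japGrad V z with hMdef
  have hM1 : 1 ≤ M := japGrad_ge_one V z
  have hMmax : ∀ w ∈ segment ℝ x y, japGrad V w ≤ M := fun w hw => hzmax hw
  -- bound on second derivative on the segment
  have hbound : ∀ w ∈ segment ℝ x y, ‖fderiv ℝ (fderiv ℝ V) w‖ ≤ C * M := by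
    intro w hw
    have h1 : japGrad V w ^ (1 - ρ₀) ≤ japGrad V w := by
      calc japGrad V w ^ (1 - ρ₀) ≤ japGrad V w ^ (1:ℝ) :=
            Real.rpow_le_rpow_of_exponent_le (japGrad_ge_one V w) (by linarith)
        _ = japGrad V w := Real.rpow_one _
    calc ‖fderiv ℝ (fderiv ℝ V) w‖ ≤ C * japGrad V w ^ (1 - ρ₀) := hC w
      _ ≤ C * M := by nlinarith [hMmax w hw]
  have hdiff : ∀ w ∈ segment ℝ x y, DifferentiableAt ℝ (fderiv ℝ V) w :=
    fun w _ => (hf1.differentiable (by norm_num)).differentiableAt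
  have hMVT : ∀ w ∈ segment ℝ x y, ∀ w' ∈ segment ℝ x y,
      ‖fderiv ℝ V w - fderiv ℝ V w'‖ ≤ C * M * ‖w - w'‖ :=
    fun w hw w' hw' =>
      (convex_segment x y).norm_image_sub_le_of_norm_fderiv_le hdiff hbound hw' hw
  have hzx : ‖z - x‖ ≤ ‖x - y‖ := by
    have h := dist_add_dist_of_mem_segment hzmem
    have h1 : dist z y ≥ 0 := dist_nonneg
    have h2 : ‖z - x‖ = dist x z := by rw [dist_eq_norm, norm_sub_rev]
    have h3 : ‖x - y‖ = dist x y := by rw [dist_eq_norm]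
    linarith
  -- M ≤ 2 japGrad V x
  have hM2 : M ≤ 2 * japGrad V x := by
    have h1 := japGrad_lip V z x
    have h2 := hMVT z hzmem x (left_mem_segment ℝ x y)
    have h3 : ‖z - x‖ ≤ δ₀ := le_trans hzx hxy1
    have hMnn : (0:ℝ) ≤ M := by linarith
    have h4 : C * M * ‖z - x‖ ≤ C * M * δ₀ :=
      mul_le_mul_of_nonneg_left h3 (mul_nonneg hC0 hMnn)
    have h5 : C * δ₀ * M ≤ (1/4) * M := mul_le_mul_of_nonneg_right hCδ hMnn
    have heq : C * M * δ₀ = C * δ₀ * M := by ring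
    linarith
  have hyM : japGrad V y ≤ M := hMmax y (right_mem_segment ℝ x y)
  have hyx : japGrad V y ≤ 2 * japGrad V x := le_trans hyM hM2
  -- japGrad V x ≤ 2 japGrad V y
  have hxy2 : japGrad V x ≤ 2 * japGrad V y := by
    have h1 := japGrad_lip V x y
    have h2 := hMVT x (left_mem_segment ℝ x y) y (right_mem_segment ℝ x y)
    have hMnn : (0:ℝ) ≤ M := by linarith
    have h5 : C * M * ‖x - y‖ ≤ C * M * δ₀ :=
      mul_le_mul_of_nonneg_left hxy1 (mul_nonneg hC0 hMnn)
    have h6 : C * δ₀ * M ≤ C * δ₀ * (2 * japGrad V x) :=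
      mul_le_mul_of_nonneg_left hM2 (mul_nonneg hC0 hδpos.le)
    have h7 : C * δ₀ * (2 * japGrad V x) ≤ (1/4) * (2 * japGrad V x) :=
      mul_le_mul_of_nonneg_right hCδ (by linarith)
    have heq : C * M * δ₀ = C * δ₀ * M := by ring
    linarith
  -- conclude
  set a := japGrad V x
  set b := japGrad V y
  have ha : (0:ℝ) < a := lt_of_lt_of_le one_pos hjx
  have hb : (0:ℝ) < b := lt_of_lt_of_le one_pos hjy
  have hratio : a ^ (-s) / b ^ (-s) = (b / a) ^ s := by
    rw [Real.div_rpow hb.le ha.le, Real.rpow_neg ha.le, Real.rpow_neg hb.le]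
    have h1 : a ^ s ≠ 0 := ne_of_gt (Real.rpow_pos_of_pos ha _)
    have h2 : b ^ s ≠ 0 := ne_of_gt (Real.rpow_pos_of_pos hb _)
    field_simp
  have hinv : ((2:ℝ) ^ (-s)) = ((1:ℝ)/2) ^ s := by
    rw [Real.rpow_neg (by norm_num : (0:ℝ) ≤ 2), one_div, ← Real.inv_rpow (by norm_num)]
  constructor
  · rw [hratio]
    calc δ₀ ≤ (2:ℝ) ^ (-s) := hδ2
      _ = ((1:ℝ)/2) ^ s := hinv
      _ ≤ (b / a) ^ s := by
          apply Real.rpow_le_rpow (by norm_num) _ hs.le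
          rw [le_div_iff₀ ha]
          linarith
  · rw [hratio]
    have h2s : (0:ℝ) < (2:ℝ) ^ s := Real.rpow_pos_of_pos two_pos _
    have hup : (b / a) ^ s ≤ (2:ℝ) ^ s := by
      apply Real.rpow_le_rpow (by positivity) _ hs.le
      rw [div_le_iff₀ ha]
      linarith
    have hfin : (2:ℝ) ^ s ≤ 1 / δ₀ := by
      rw [le_div_iff₀ hδpos]
      have : (2:ℝ) ^ (-s) = ((2:ℝ) ^ s)⁻¹ := by
        rw [Real.rpow_neg (by norm_num : (0:ℝ) ≤ 2)]
      rw [this] at hδ2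
      calc (2:ℝ) ^ s * δ₀ ≤ (2:ℝ) ^ s * ((2:ℝ) ^ s)⁻¹ := by nlinarith
        _ = 1 := mul_inv_cancel₀ (ne_of_gt h2s)
    linarith
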